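/- arXiv:0711.4657 — 5 statements merged into one kernel-verified Lean document; each statement's English description precedes it below -/
import Mathlib

section
/- Let C and D be monoidal categories, and let F : C ⥤ D and G : D ⥤ C be lax monoidal functors. Suppose there are natural isomorphisms η : F ⋙ G ≅ 𝟭 C and ξ : G ⋙ F ≅ 𝟭 D whose hom components η.hom and ξ.hom are monoidal natural transformations (with respect to the composite lax monoidal structures on F ⋙ G and G ⋙ F and the identity lax monoidal structure on the identity functors). Then both F and G are strong monoidal: ε_F, ε_G and all μ_F X Y, μ_G X Y are isomorphisms. (This is the one-object instance of the paper's Proposition characterizing equivalences in the 2-category of bicategories, lax functors and icons: any lax functor participating in such an equivalence is a homomorphism.) -/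
open CategoryTheory Category MonoidalCategory Functor.LaxMonoidal

private lemma isIso_of_two_sided {T : Type*} [Category T] {X Y : T} (f : X ⟶ Y) (a b : Y ⟶ X)
    (ha : a ≫ f = 𝟙 Y) (hb : f ≫ b = 𝟙 X) : IsIso f := by
  have hab : a = b := by
    calc a = a ≫ f ≫ b := by rw [hb, comp_id]
    _ = (a ≫ f) ≫ b := by rw [assoc]
    _ = b := by rw [ha, id_comp]
  exact ⟨a, by rw [hab]; exact hb, ha⟩

/-- One-object instance of the Proposition characterizing equivalences in the
2-category of bicategories, lax functors and icons: if lax monoidal functors `F` and `G`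
are mutually inverse up to monoidal natural isomorphisms, then both are strong monoidal,
i.e. their units `ε` and tensorators `μ` are isomorphisms. -/
theorem strong_monoidal_of_monoidal_equivalence
    {C : Type*} [Category C] [MonoidalCategory C]
    {D : Type*} [Category D] [MonoidalCategory D]
    (F : C ⥤ D) (G : D ⥤ C) [F.LaxMonoidal] [G.LaxMonoidal]
    (η : F ⋙ G ≅ 𝟭 C) (hη : NatTrans.IsMonoidal η.hom)
    (ξ : G ⋙ F ≅ 𝟭 D) (hξ : NatTrans.IsMonoidal ξ.hom) :
    IsIso (ε F) ∧ IsIso (ε G) ∧ (∀ X Y : C, IsIso (μ F X Y)) ∧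
      (∀ X' Y' : D, IsIso (μ G X' Y')) := by
  let e : C ≌ D := CategoryTheory.Equivalence.mk F G η.symm ξ
  haveI : F.IsEquivalence := e.isEquivalence_functor
  haveI : G.IsEquivalence := e.isEquivalence_inverse
  -- basic monoidality equations
  have e1 : ε G ≫ G.map (ε F) ≫ η.hom.app (𝟙_ C) = 𝟙 _ := by
    simpa [Functor.LaxMonoidal.comp_ε, Functor.LaxMonoidal.id_ε, assoc] using hη.unit
  have e2 : ε F ≫ F.map (ε G) ≫ ξ.hom.app (𝟙_ D) = 𝟙 _ := by
    simpa [Functor.LaxMonoidal.comp_ε, Functor.LaxMonoidal.id_ε, assoc] using hξ.unit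
  have e3 : ∀ X Y : C, μ G (F.obj X) (F.obj Y) ≫ G.map (μ F X Y) ≫ η.hom.app (X ⊗ Y)
      = η.hom.app X ⊗ₘ η.hom.app Y := by
    intro X Y
    simpa [Functor.LaxMonoidal.comp_μ, Functor.LaxMonoidal.id_μ, assoc] using hη.tensor X Y
  have e4 : ∀ X' Y' : D, μ F (G.obj X') (G.obj Y') ≫ F.map (μ G X' Y') ≫ ξ.hom.app (X' ⊗ Y')
      = ξ.hom.app X' ⊗ₘ ξ.hom.app Y' := by
    intro X' Y'
    simpa [Functor.LaxMonoidal.comp_μ, Functor.LaxMonoidal.id_μ, assoc] using hξ.tensor X' Y'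
  -- ε G is an iso
  have hεG : IsIso (ε G) := by
    have hmap : IsIso (F.map (ε G)) := by
      refine isIso_of_two_sided _ (ξ.hom.app (𝟙_ D) ≫ ε F)
        (F.map (G.map (ε F) ≫ η.hom.app (𝟙_ C))) ?_ ?_
      · have : ε F ≫ F.map (ε G) = inv (ξ.hom.app (𝟙_ D)) := by
          rw [← cancel_mono (ξ.hom.app (𝟙_ D)), assoc, e2, IsIso.inv_hom_id]
        rw [assoc, this, IsIso.hom_inv_id]
      · rw [← F.map_comp, e1, F.map_id]
    exact isIso_of_reflects_iso (ε G) F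
  -- ε F is an iso
  have hεF : IsIso (ε F) := by
    have heq : ε F = inv (F.map (ε G) ≫ ξ.hom.app (𝟙_ D)) := by
      rw [← cancel_mono (F.map (ε G) ≫ ξ.hom.app (𝟙_ D)), e2, IsIso.inv_hom_id]
    rw [heq]; infer_instance
  -- retraction for μ G (F.obj X) (F.obj Y)
  have rG : ∀ X Y : C, μ G (F.obj X) (F.obj Y) ≫
      (G.map (μ F X Y) ≫ η.hom.app (X ⊗ Y) ≫ inv (η.hom.app X ⊗ₘ η.hom.app Y)) = 𝟙 _ := by
    intro X Y
    rw [← assoc, ← assoc, assoc (μ G _ _), e3, IsIso.hom_inv_id]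
  -- retraction for arbitrary μ G X' Y'
  have rG' : ∀ X' Y' : D, ∃ r, μ G X' Y' ≫ r = 𝟙 _ := by
    intro X' Y'
    have nat : μ G (F.obj (G.obj X')) (F.obj (G.obj Y')) ≫ G.map (ξ.hom.app X' ⊗ₘ ξ.hom.app Y')
        = (G.map (ξ.hom.app X') ⊗ₘ G.map (ξ.hom.app Y')) ≫ μ G X' Y' :=
      (Functor.LaxMonoidal.μ_natural G (ξ.hom.app X') (ξ.hom.app Y')).symm
    refine ⟨inv (G.map (ξ.hom.app X' ⊗ₘ ξ.hom.app Y')) ≫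
      (G.map (μ F (G.obj X') (G.obj Y')) ≫ η.hom.app (G.obj X' ⊗ G.obj Y')
        ≫ inv (η.hom.app (G.obj X') ⊗ₘ η.hom.app (G.obj Y')))
      ≫ (G.map (ξ.hom.app X') ⊗ₘ G.map (ξ.hom.app Y')), ?_⟩
    have : μ G X' Y' = inv (G.map (ξ.hom.app X') ⊗ₘ G.map (ξ.hom.app Y')) ≫
        μ G (F.obj (G.obj X')) (F.obj (G.obj Y')) ≫ G.map (ξ.hom.app X' ⊗ₘ ξ.hom.app Y') := by
      rw [nat, IsIso.inv_hom_id_assoc]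
    rw [this]
    simp only [assoc, IsIso.hom_inv_id_assoc]
    have rGr := reassoc_of% (rG (G.obj X') (G.obj Y'))
    rw [rGr, IsIso.inv_hom_id]
  -- μ G is an iso
  have hμG : ∀ X' Y' : D, IsIso (μ G X' Y') := by
    intro X' Y'
    obtain ⟨r, hr⟩ := rG' X' Y'
    have hmap : IsIso (F.map (μ G X' Y')) := by
      refine isIso_of_two_sided _
        (ξ.hom.app (X' ⊗ Y') ≫ inv (ξ.hom.app X' ⊗ₘ ξ.hom.app Y') ≫ μ F (G.obj X') (G.obj Y'))
        (F.map r) ?_ ?_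
      · have h4' : (μ F (G.obj X') (G.obj Y') ≫ F.map (μ G X' Y')) ≫ ξ.hom.app (X' ⊗ Y')
            = (ξ.hom.app X' ⊗ₘ ξ.hom.app Y') := by rw [assoc]; exact e4 X' Y'
        have : μ F (G.obj X') (G.obj Y') ≫ F.map (μ G X' Y')
            = (ξ.hom.app X' ⊗ₘ ξ.hom.app Y') ≫ inv (ξ.hom.app (X' ⊗ Y')) := by
          rw [← h4', assoc, IsIso.hom_inv_id, comp_id]
        rw [assoc, assoc, this]
        simp
      · rw [← F.map_comp, hr, F.map_id]
    exact isIso_of_reflects_iso (μ G X' Y') F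
  refine ⟨hεF, hεG, ?_, hμG⟩
  -- μ F is an iso
  intro X Y
  haveI := hμG (F.obj X) (F.obj Y)
  have hmap : IsIso (G.map (μ F X Y)) := by
    have : G.map (μ F X Y) = inv (μ G (F.obj X) (F.obj Y)) ≫
        (η.hom.app X ⊗ₘ η.hom.app Y) ≫ inv (η.hom.app (X ⊗ Y)) := by
      rw [← e3 X Y]
      simp
    rw [this]; infer_instance
  exact isIso_of_reflects_iso (μ F X Y) G
end

section
/- Let C and D be monoidal categories and let F : C ⥤ D be a lax monoidal functor. Then the following are equivalent: (i) there exist a lax monoidal functor G : D ⥤ C and natural isomorphisms F ⋙ G ≅ 𝟭 C and G ⋙ F ≅ 𝟭 D whose hom components are monoidal natural transformations; (ii) the underlying functor F is an equivalence of categories, and F is strong monoidal (ε_F and all μ_F X Y are isomorphisms). (This is the full one-object instance of the paper's Proposition: a lax functor of bicategories is an equivalence in the 2-category of bicategories, lax functors, and icons if and only if it is bijective on objects, a local equivalence, and a homomorphism.) -/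
open CategoryTheory Category MonoidalCategory Functor.LaxMonoidal

/-- Full one-object instance of the Proposition: a lax monoidal functor `F` is an
equivalence in the 2-category of monoidal categories, lax monoidal functors and
monoidal transformations (i.e. admits a lax monoidal quasi-inverse with monoidal
unit and counit isomorphisms) if and only if its underlying functor is an equivalence
of categories and `F` is strong monoidal. -/
theorem monoidal_equivalence_iff_isEquivalence_and_strong
    {C : Type*} [Category C] [MonoidalCategory C]
    {D : Type*} [Category D] [MonoidalCategory D]
    (F : C ⥤ D) [F.LaxMonoidal] :
    (∃ (G : D ⥤ C) (instG : G.LaxMonoidal) (η : F ⋙ G ≅ 𝟭 C) (ξ : G ⋙ F ≅ 𝟭 D),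
        NatTrans.IsMonoidal η.hom ∧ NatTrans.IsMonoidal ξ.hom) ↔
      (F.IsEquivalence ∧ IsIso (ε F) ∧ ∀ X Y : C, IsIso (μ F X Y)) := by
  constructor
  · rintro ⟨G, instG, η, ξ, hη, hξ⟩
    letI := instG
    haveI hFe : F.IsEquivalence :=
      (CategoryTheory.Equivalence.mk F G η.symm ξ).isEquivalence_functor
    haveI hGe : G.IsEquivalence :=
      (CategoryTheory.Equivalence.mk F G η.symm ξ).isEquivalence_inverse
    -- key identities from monoidality of `η.hom` and `ξ.hom`
    have hηu : ε G ≫ G.map (ε F) ≫ η.hom.app (𝟙_ C) = 𝟙 _ := by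
      have := hη.unit
      simpa [Functor.LaxMonoidal.comp_ε] using this
    have hξu : ε F ≫ F.map (ε G) ≫ ξ.hom.app (𝟙_ D) = 𝟙 _ := by
      have := hξ.unit
      simpa [Functor.LaxMonoidal.comp_ε] using this
    have hηt : ∀ X Y : C, μ G (F.obj X) (F.obj Y) ≫ G.map (μ F X Y) ≫ η.hom.app (X ⊗ Y) =
        (η.hom.app X ⊗ₘ η.hom.app Y) := by
      intro X Y
      have := hη.tensor X Y
      simpa [Functor.LaxMonoidal.comp_μ] using this
    have hξt : ∀ X Y : D, μ F (G.obj X) (G.obj Y) ≫ F.map (μ G X Y) ≫ ξ.hom.app (X ⊗ Y) =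
        (ξ.hom.app X ⊗ₘ ξ.hom.app Y) := by
      intro X Y
      have := hξ.tensor X Y
      simpa [Functor.LaxMonoidal.comp_μ] using this
    refine ⟨hFe, ?_, ?_⟩
    · -- ε F is iso
      haveI : IsSplitMono (ε F) :=
        ⟨⟨⟨F.map (ε G) ≫ ξ.hom.app (𝟙_ D), by simpa using hξu⟩⟩⟩
      haveI : IsSplitEpi (G.map (ε F)) := by
        refine ⟨⟨⟨η.hom.app (𝟙_ C) ≫ ε G, ?_⟩⟩⟩
        have h1 : ε G ≫ G.map (ε F) = η.inv.app (𝟙_ C) := by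
          rw [← cancel_mono (η.hom.app (𝟙_ C))]
          simpa using hηu
        rw [assoc, h1]
        simp
      haveI : IsIso (G.map (ε F)) := isIso_of_mono_of_isSplitEpi _
      exact isIso_of_reflects_iso (ε F) G
    · intro X Y
      -- split epi part: G.map (μ F X Y) is split epi
      haveI : IsSplitEpi (G.map (μ F X Y)) := by
        refine ⟨⟨⟨η.hom.app (X ⊗ Y) ≫ (η.inv.app X ⊗ₘ η.inv.app Y) ≫ μ G _ _, ?_⟩⟩⟩
        have h1 : μ G (F.obj X) (F.obj Y) ≫ G.map (μ F X Y) =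
            (η.hom.app X ⊗ₘ η.hom.app Y) ≫ η.inv.app (X ⊗ Y) := by
          rw [← cancel_mono (η.hom.app (X ⊗ Y))]
          simpa using hηt X Y
        rw [assoc, assoc, h1, tensorHom_comp_tensorHom_assoc]
        simp
      -- split mono part: μ F X Y is split mono
      haveI : IsSplitMono (μ F X Y) := by
        refine ⟨⟨⟨F.map (η.inv.app X ⊗ₘ η.inv.app Y) ≫
            F.map (μ G (F.obj X) (F.obj Y)) ≫ ξ.hom.app (F.obj X ⊗ F.obj Y) ≫
            inv (ξ.hom.app (F.obj X) ⊗ₘ ξ.hom.app (F.obj Y)) ≫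
            inv (F.map (η.inv.app X) ⊗ₘ F.map (η.inv.app Y)), ?_⟩⟩⟩
        have hnat : μ F X Y ≫ F.map (η.inv.app X ⊗ₘ η.inv.app Y) =
            (F.map (η.inv.app X) ⊗ₘ F.map (η.inv.app Y)) ≫
              μ F (G.obj (F.obj X)) (G.obj (F.obj Y)) :=
          (Functor.LaxMonoidal.μ_natural F _ _).symm
        have key := reassoc_of% (hξt (F.obj X) (F.obj Y))
        rw [← assoc, hnat, assoc, key]
        simp
      haveI : IsIso (G.map (μ F X Y)) := isIso_of_mono_of_isSplitEpi _
      exact isIso_of_reflects_iso (μ F X Y) G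
  · rintro ⟨hFeq, hε, hμ⟩
    haveI : IsIso (ε F) := hε
    haveI : ∀ X Y, IsIso (μ F X Y) := hμ
    letI instM : F.Monoidal := Functor.Monoidal.ofLaxMonoidal F
    let e : C ≌ D := F.asEquivalence
    letI : e.functor.Monoidal := instM
    letI : e.inverse.Monoidal := e.inverseMonoidal
    haveI : e.IsMonoidal := ⟨rfl, fun _ _ => rfl⟩
    refine ⟨e.inverse, inferInstance, e.unitIso.symm, e.counitIso, ?_, ?_⟩
    · refine ⟨?_, ?_⟩
      · -- ε (F ⋙ G) ≫ unitIso.inv.app 𝟙 = 𝟙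
        have h := e.unitIso_hom_app_comp_inverse_map_η_functor
        have h2 : Functor.OplaxMonoidal.η e.functor ≫ ε F = 𝟙 _ :=
          Functor.Monoidal.η_ε (F := e.functor)
        rw [Functor.LaxMonoidal.comp_ε, Iso.symm_hom, assoc, ← h, assoc,
          ← Functor.map_comp_assoc, h2]
        exact (by simp :
          e.unitIso.hom.app (𝟙_ C) ≫ e.inverse.map (𝟙 _) ≫ e.unitIso.inv.app (𝟙_ C) = 𝟙 _)
      · intro X Y
        have h := e.unitIso_hom_app_tensor_comp_inverse_map_δ_functor X Y
        have h2 : Functor.OplaxMonoidal.δ e.functor X Y ≫ μ F X Y = 𝟙 _ :=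
          Functor.Monoidal.δ_μ (F := e.functor) X Y
        have h3 : (e.unitIso.hom.app X ⊗ₘ e.unitIso.hom.app Y) ≫
            μ e.inverse (F.obj X) (F.obj Y) =
            e.unitIso.hom.app (X ⊗ Y) ≫
              e.inverse.map (Functor.OplaxMonoidal.δ e.functor X Y) := h.symm
        have h3' : ∀ {Z : C} (k : e.inverse.obj (F.obj X ⊗ F.obj Y) ⟶ Z),
            (e.unitIso.hom.app X ⊗ₘ e.unitIso.hom.app Y) ≫ μ e.inverse (F.obj X) (F.obj Y) ≫ k =
              e.unitIso.hom.app (X ⊗ Y) ≫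
                e.inverse.map (Functor.OplaxMonoidal.δ e.functor X Y) ≫ k := by
          intro Z k
          exact (Category.assoc _ _ _).symm.trans ((congrArg (· ≫ k) h3).trans (Category.assoc _ _ _))
        erw [Functor.LaxMonoidal.comp_μ, Iso.symm_hom, assoc,
          ← cancel_epi (e.unitIso.hom.app X ⊗ₘ e.unitIso.hom.app Y), h3',
          ← Functor.map_comp_assoc, h2]
        simp [tensorHom_comp_tensorHom_assoc, Functor.LaxMonoidal.id_μ]
        exact (by simp : e.unitIso.hom.app (X ⊗ Y) ≫ e.inverse.map (𝟙 _) ≫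
          e.unitIso.inv.app (X ⊗ Y) =
            (e.unitIso.hom.app X ⊗ₘ e.unitIso.hom.app Y) ≫ (e.unitIso.inv.app X ⊗ₘ e.unitIso.inv.app Y))
    · refine ⟨?_, ?_⟩
      · have h : F.map (ε e.inverse) ≫ e.counitIso.hom.app (𝟙_ D) =
            Functor.OplaxMonoidal.η e.functor :=
          e.functor_map_ε_inverse_comp_counitIso_hom_app
        have h2 : ε F ≫ Functor.OplaxMonoidal.η e.functor = 𝟙 _ :=
          Functor.Monoidal.ε_η (F := e.functor)
        rw [Functor.LaxMonoidal.comp_ε, assoc, h, h2]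
        rfl
      · intro X Y
        have h : F.map (μ e.inverse X Y) ≫ e.counitIso.hom.app (X ⊗ Y) =
            Functor.OplaxMonoidal.δ e.functor (e.inverse.obj X) (e.inverse.obj Y) ≫
              (e.counitIso.hom.app X ⊗ₘ e.counitIso.hom.app Y) :=
          e.functor_map_μ_inverse_comp_counitIso_hom_app_tensor X Y
        have h2 : μ F (e.inverse.obj X) (e.inverse.obj Y) ≫
            Functor.OplaxMonoidal.δ e.functor (e.inverse.obj X) (e.inverse.obj Y) = 𝟙 _ :=
          Functor.Monoidal.μ_δ (F := e.functor) _ _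
        erw [Functor.LaxMonoidal.comp_μ, assoc, h, ← assoc, h2]
        simp [Functor.LaxMonoidal.id_μ]
        exact Category.id_comp _
end

section
/- Let C and D be monoidal categories, and let F : C ⥤ D and G : D ⥤ C be lax monoidal functors. Suppose there are natural isomorphisms η : F ⋙ G ≅ 𝟭 C and ξ : G ⋙ F ≅ 𝟭 D whose hom components are monoidal natural transformations. Then ε_F, ε_G, every μ_F X Y (X, Y in C), and every μ_G X' Y' (X', Y' in D) are split monomorphisms. (This is the split-mono step, in the one-object case, of the proof of the paper's Proposition characterizing equivalences in the 2-category of bicategories, lax functors and icons; it uses that F and G are essentially surjective to pass from objects in the image of F to arbitrary objects.) -/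
open CategoryTheory Category MonoidalCategory Functor.LaxMonoidal

/-- If `f ≫ g = 𝟙`, then `f` is a split mono. -/
lemma isSplitMono_of_comp_eq_id {C : Type*} [Category C] {X Y : C}
    (f : X ⟶ Y) (g : Y ⟶ X) (h : f ≫ g = 𝟙 X) : IsSplitMono f :=
  IsSplitMono.mk' ⟨g, h⟩

/-- If `f ≫ g` is a split mono, then so is `f`. -/
lemma isSplitMono_of_comp {C : Type*} [Category C] {X Y Z : C}
    (f : X ⟶ Y) (g : Y ⟶ Z) (h : IsSplitMono (f ≫ g)) : IsSplitMono f :=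
  isSplitMono_of_comp_eq_id f (g ≫ retraction (f ≫ g)) (by
    rw [← Category.assoc]; exact IsSplitMono.id (f ≫ g))

/-- Split-mono step (one-object case) of the proof of the Proposition characterizing
equivalences in the 2-category of bicategories, lax functors and icons: if lax monoidal
functors `F` and `G` are mutually inverse up to monoidal natural isomorphisms, then
the units `ε` and all tensorators `μ` of `F` and `G` are split monomorphisms. -/
theorem structure_isSplitMono_of_monoidal_equivalence
    {C : Type*} [Category C] [MonoidalCategory C]
    {D : Type*} [Category D] [MonoidalCategory D]
    (F : C ⥤ D) (G : D ⥤ C) [F.LaxMonoidal] [G.LaxMonoidal]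
    (η : F ⋙ G ≅ 𝟭 C) (hη : NatTrans.IsMonoidal η.hom)
    (ξ : G ⋙ F ≅ 𝟭 D) (hξ : NatTrans.IsMonoidal ξ.hom) :
    IsSplitMono (ε F) ∧ IsSplitMono (ε G) ∧
      (∀ X Y : C, IsSplitMono (μ F X Y)) ∧
      (∀ X' Y' : D, IsSplitMono (μ G X' Y')) := by
  -- units
  have hεF : IsSplitMono (ε F) := by
    refine isSplitMono_of_comp_eq_id _ (F.map (ε G) ≫ ξ.hom.app (𝟙_ D)) ?_
    have := hξ.unit
    rw [comp_ε, id_ε, Category.assoc] at this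
    simpa using this
  have hεG : IsSplitMono (ε G) := by
    refine isSplitMono_of_comp_eq_id _ (G.map (ε F) ≫ η.hom.app (𝟙_ C)) ?_
    have := hη.unit
    rw [comp_ε, id_ε, Category.assoc] at this
    simpa using this
  -- tensorators on objects in the image
  have hμF' : ∀ X' Y' : D, IsSplitMono (μ F (G.obj X') (G.obj Y')) := by
    intro X' Y'
    refine isSplitMono_of_comp_eq_id _
      (F.map (μ G X' Y') ≫ ξ.hom.app (X' ⊗ Y') ≫ inv (ξ.hom.app X' ⊗ₘ ξ.hom.app Y')) ?_
    have := hξ.tensor X' Y'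
    rw [comp_μ, id_μ, Category.comp_id, Category.assoc] at this
    slice_lhs 1 3 => rw [this]
    simp
  have hμG' : ∀ X Y : C, IsSplitMono (μ G (F.obj X) (F.obj Y)) := by
    intro X Y
    refine isSplitMono_of_comp_eq_id _
      (G.map (μ F X Y) ≫ η.hom.app (X ⊗ Y) ≫ inv (η.hom.app X ⊗ₘ η.hom.app Y)) ?_
    have := hη.tensor X Y
    rw [comp_μ, id_μ, Category.comp_id, Category.assoc] at this
    slice_lhs 1 3 => rw [this]
    simp
  refine ⟨hεF, hεG, ?_, ?_⟩
  · intro X Y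
    refine isSplitMono_of_comp _ (F.map (η.inv.app X ⊗ₘ η.inv.app Y)) ?_
    rw [← μ_natural]
    have : IsIso (F.map (η.inv.app X) ⊗ₘ F.map (η.inv.app Y)) := by infer_instance
    have h := hμF' (F.obj X) (F.obj Y)
    refine isSplitMono_of_comp_eq_id _
      (retraction (μ F (G.obj (F.obj X)) (G.obj (F.obj Y))) ≫
        inv (F.map (η.inv.app X) ⊗ₘ F.map (η.inv.app Y))) ?_
    dsimp only [Functor.comp_obj]
    rw [Category.assoc, ← Category.assoc (μ F _ _), IsSplitMono.id]
    simp
  · intro X' Y'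
    refine isSplitMono_of_comp _ (G.map (ξ.inv.app X' ⊗ₘ ξ.inv.app Y')) ?_
    rw [← μ_natural]
    have h := hμG' (G.obj X') (G.obj Y')
    refine isSplitMono_of_comp_eq_id _
      (retraction (μ G (F.obj (G.obj X')) (F.obj (G.obj Y'))) ≫
        inv (G.map (ξ.inv.app X') ⊗ₘ G.map (ξ.inv.app Y'))) ?_
    dsimp only [Functor.comp_obj]
    rw [Category.assoc, ← Category.assoc (μ G _ _), IsSplitMono.id]
    simp
end

section
/- Let C and D be monoidal categories, and let F : C ⥤ D and G : D ⥤ C be lax monoidal functors. Suppose there are natural isomorphisms η : F ⋙ G ≅ 𝟭 C and ξ : G ⋙ F ≅ 𝟭 D whose hom components are monoidal natural transformations. Then ε_F, ε_G, every μ_F X Y (X, Y in C), and every μ_G X' Y' (X', Y' in D) are split epimorphisms. (This is the split-epi step, in the one-object case, of the proof of the paper's Proposition characterizing equivalences in the 2-category of bicategories, lax functors and icons; it uses that G.map (μ_F X Y) is split epi and that the fully faithful functor G reflects split epimorphisms.) -/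
open CategoryTheory Category MonoidalCategory Functor.LaxMonoidal

private lemma aux_splitEpi {E : Type*} [Category E] {W X Y Z : E}
    (a : W ⟶ X) (b : X ⟶ Y) (c : Y ⟶ Z) (d : W ⟶ Z) [IsIso c] [IsIso d]
    (h : a ≫ b ≫ c = d) : IsSplitEpi b := by
  refine IsSplitEpi.mk' ⟨c ≫ CategoryTheory.inv d ≫ a, ?_⟩
  have hab : a ≫ b = d ≫ CategoryTheory.inv c := by
    rw [← h]; simp
  rw [Category.assoc, Category.assoc, hab]
  simp

/-- Split-epi step (one-object case) of the proof of the Proposition characterizing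
equivalences in the 2-category of bicategories, lax functors and icons: if lax monoidal
functors `F` and `G` are mutually inverse up to monoidal natural isomorphisms, then
the units `ε` and all tensorators `μ` of `F` and `G` are split epimorphisms. -/
theorem structure_isSplitEpi_of_monoidal_equivalence
    {C : Type*} [Category C] [MonoidalCategory C]
    {D : Type*} [Category D] [MonoidalCategory D]
    (F : C ⥤ D) (G : D ⥤ C) [F.LaxMonoidal] [G.LaxMonoidal]
    (η : F ⋙ G ≅ 𝟭 C) (hη : NatTrans.IsMonoidal η.hom)
    (ξ : G ⋙ F ≅ 𝟭 D) (hξ : NatTrans.IsMonoidal ξ.hom) :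
    IsSplitEpi (ε F) ∧ IsSplitEpi (ε G) ∧
      (∀ X Y : C, IsSplitEpi (μ F X Y)) ∧
      (∀ X' Y' : D, IsSplitEpi (μ G X' Y')) := by
  let e : C ≌ D := CategoryTheory.Equivalence.mk F G η.symm ξ
  haveI : G.Full := e.fullyFaithfulInverse.full
  haveI : G.Faithful := e.fullyFaithfulInverse.faithful
  haveI : F.Full := e.fullyFaithfulFunctor.full
  haveI : F.Faithful := e.fullyFaithfulFunctor.faithful
  refine ⟨?_, ?_, ?_, ?_⟩
  · rw [← G.isSplitEpi_iff]
    have h := hη.unit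
    rw [comp_ε, id_ε, Category.assoc] at h
    exact aux_splitEpi (ε G) (G.map (ε F)) (η.hom.app (𝟙_ C)) (𝟙 _) h
  · rw [← F.isSplitEpi_iff]
    have h := hξ.unit
    rw [comp_ε, id_ε, Category.assoc] at h
    exact aux_splitEpi (ε F) (F.map (ε G)) (ξ.hom.app (𝟙_ D)) (𝟙 _) h
  · intro X Y
    rw [← G.isSplitEpi_iff]
    have h := hη.tensor X Y
    rw [comp_μ, id_μ, Category.comp_id, Category.assoc] at h
    exact aux_splitEpi (μ G (F.obj X) (F.obj Y)) (G.map (μ F X Y))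
      (η.hom.app (X ⊗ Y)) (η.hom.app X ⊗ₘ η.hom.app Y) h
  · intro X' Y'
    rw [← F.isSplitEpi_iff]
    have h := hξ.tensor X' Y'
    rw [comp_μ, id_μ, Category.comp_id, Category.assoc] at h
    exact aux_splitEpi (μ F (G.obj X') (G.obj Y')) (F.map (μ G X' Y'))
      (ξ.hom.app (X' ⊗ Y')) (ξ.hom.app X' ⊗ₘ ξ.hom.app Y') h
end

section
/- For every bicategory B there exist a bicategory B' which is strict (its associators and unitors are identities, in the sense of Mathlib's `Bicategory.Strict`) together with a pseudofunctor F : B ⟶ B' such that the object map of F is bijective and, for every pair of objects a, b of B, the induced functor F.mapFunctor a b : (a ⟶ b) ⥤ (F.obj a ⟶ F.obj b) between hom-categories is an equivalence of categories. (This is the content of the paper's Theorem that every bicategory is equivalent, in the 2-category of bicategories and icons, to a 2-category, so that this 2-category of bicategories is biequivalent to its full sub-2-category of strict bicategories; combined with the paper's characterization of equivalences, such an F is precisely an equivalence in that 2-category.) -/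
universe w v u

open CategoryTheory CategoryTheory.Bicategory

namespace Strictification

variable {B : Type u} [Bicategory.{w, v} B]

/-- composite of a path of 1-cells -/
def cp {a : B} : ∀ {b : B}, Quiver.Path a b → (a ⟶ b)
  | _, .nil => 𝟙 a
  | _, .cons p f => cp p ≫ f

@[simp] lemma cp_nil (a : B) : cp (.nil : Quiver.Path a a) = 𝟙 a := rfl
@[simp] lemma cp_cons {a b c : B} (p : Quiver.Path a b) (f : b ⟶ c) :
    cp (p.cons f) = cp p ≫ f := rfl

lemma eqToHom_whiskerRight' {a b c : B} {f f' : a ⟶ b} (h : f = f') (g : b ⟶ c) :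
    eqToHom h ▷ g = eqToHom (by rw [h]) := by subst h; simp

lemma whiskerLeft_eqToHom' {a b c : B} (f : a ⟶ b) {g g' : b ⟶ c} (h : g = g') :
    f ◁ eqToHom h = eqToHom (by rw [h]) := by subst h; simp

def compIso {a b : B} (p : Quiver.Path a b) : ∀ {c : B} (q : Quiver.Path b c),
    cp (p.comp q) ≅ cp p ≫ cp q
  | _, .nil => (ρ_ (cp p)).symm
  | _, .cons q f => whiskerRightIso (compIso p q) f ≪≫ α_ _ _ _

@[simp] lemma compIso_nil {a b : B} (p : Quiver.Path a b) :
    compIso p .nil = (ρ_ (cp p)).symm := rfl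

@[simp] lemma compIso_cons {a b c d : B} (p : Quiver.Path a b) (q : Quiver.Path b c)
    (f : c ⟶ d) :
    compIso p (q.cons f) = whiskerRightIso (compIso p q) f ≪≫ α_ _ _ _ := rfl

lemma compIso_nil_left {a : B} : ∀ {b : B} (q : Quiver.Path a b),
    (compIso .nil q).hom = eqToHom (congrArg cp q.nil_comp) ≫ (λ_ (cp q)).inv
  | _, .nil => by simp [unitors_inv_equal]; exact (Category.id_comp _).symm
  | _, .cons q f => by
      rw [compIso_cons]
      simp only [Iso.trans_hom, whiskerRightIso_hom, compIso_nil_left q, comp_whiskerRight,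
        eqToHom_whiskerRight', leftUnitor_comp_inv]
      simp

/-- cocycle condition -/
lemma compIso_assoc {a b c : B} (p : Quiver.Path a b) (q : Quiver.Path b c) :
    ∀ {d : B} (r : Quiver.Path c d),
    (compIso (p.comp q) r).hom ≫ (compIso p q).hom ▷ cp r ≫ (α_ (cp p) (cp q) (cp r)).hom =
      eqToHom (congrArg cp (p.comp_assoc q r)) ≫ (compIso p (q.comp r)).hom ≫
        cp p ◁ (compIso q r).hom
  | _, .nil => by
      simp only [compIso_nil, cp_nil, Iso.symm_hom]
      rw [Bicategory.whiskerRight_id]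
      simp only [rightUnitor_comp_inv, Category.assoc, Iso.inv_hom_id, Category.comp_id,
        Iso.inv_hom_id_assoc]
      simp; exact (Category.id_comp _).symm
  | _, .cons r f => by
      have IH := compIso_assoc p q r
      simp only [Quiver.Path.comp_cons, compIso_cons, Iso.trans_hom, whiskerRightIso_hom,
        cp_cons, Category.assoc]
      rw [← associator_naturality_left_assoc, ← pentagon,
        ← comp_whiskerRight_assoc, ← comp_whiskerRight_assoc]
      conv_lhs => rw [Category.assoc, IH]
      simp only [comp_whiskerRight, Category.assoc, eqToHom_whiskerRight',
        whisker_assoc_assoc, Iso.inv_hom_id_assoc, Bicategory.whiskerLeft_comp]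

variable (B) in
/-- Type synonym for the strictification. -/
structure Str : Type u where
  /-- the underlying object -/
  as : B

instance : CategoryStruct.{max u v} (Str B) where
  Hom a b := Quiver.Path (V := B) a.as b.as
  id a := Quiver.Path.nil
  comp p q := p.comp q

instance homCategory (a b : Str B) : Category.{w} (a ⟶ b) where
  Hom p q := cp (B := B) p ⟶ cp q
  id p := 𝟙 (cp p)
  comp η θ := η ≫ θ
  id_comp := fun η => Category.id_comp (obj := _) η
  comp_id := fun η => Category.comp_id η
  assoc := fun η θ ι => Category.assoc η θ ι

/-- reinterpret a 2-cell of `Str` as a morphism in `B` -/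
def h2 {a b : Str B} {p q : a ⟶ b} (η : p ⟶ q) : cp (B := B) p ⟶ cp q := η
/-- reinterpret a morphism in `B` as a 2-cell of `Str` -/
def h2' {a b : Str B} {p q : a ⟶ b} (η : cp (B := B) p ⟶ cp q) : p ⟶ q := η

@[simp] lemma h2_h2' {a b : Str B} {p q : a ⟶ b} (η : cp (B := B) p ⟶ cp q) :
    h2 (h2' η : p ⟶ q) = η := rfl
@[simp] lemma h2'_h2 {a b : Str B} {p q : a ⟶ b} (η : p ⟶ q) : h2' (h2 η) = η := rfl
@[simp] lemma h2_comp {a b : Str B} {p q r : a ⟶ b} (η : p ⟶ q) (θ : q ⟶ r) :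
    h2 (η ≫ θ) = h2 η ≫ h2 θ := rfl
@[simp] lemma h2_id {a b : Str B} (p : a ⟶ b) : h2 (𝟙 p) = 𝟙 (cp (B := B) p) := rfl
@[simp] lemma h2'_comp {a b : Str B} {p q r : a ⟶ b}
    (η : cp (B := B) p ⟶ cp q) (θ : cp q ⟶ cp r) :
    (h2' (η ≫ θ) : p ⟶ r) = h2' η ≫ h2' θ := rfl

lemma h2_eqToHom {a b : Str B} {p q : a ⟶ b} (h : p = q) :
    h2 (eqToHom h) = eqToHom (congrArg cp h) := by subst h; rfl

lemma h2_inj {a b : Str B} {p q : a ⟶ b} {η θ : p ⟶ q} (h : h2 η = h2 θ) : η = θ := h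

@[simp] lemma str_id2 {a b : Str B} (p : a ⟶ b) : (𝟙 p : cp (B := B) p ⟶ cp p) = 𝟙 (cp p) := rfl
@[simp] lemma str_comp2 {a b : Str B} {p q r : a ⟶ b} (η : p ⟶ q) (θ : q ⟶ r) :
    ((η ≫ θ : p ⟶ r) : cp (B := B) p ⟶ cp r) =
      ((η : cp p ⟶ cp q) ≫ (θ : cp q ⟶ cp r)) := rfl

/-- left whiskering in `Str` -/
def wL {a b c : Str B} (p : a ⟶ b) {q q' : b ⟶ c} (η : q ⟶ q') : p ≫ q ⟶ p ≫ q' :=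
  h2' ((compIso (B := B) p q).hom ≫ cp p ◁ h2 η ≫ (compIso p q').inv)

/-- right whiskering in `Str` -/
def wR {a b c : Str B} {p p' : a ⟶ b} (η : p ⟶ p') (q : b ⟶ c) : p ≫ q ⟶ p' ≫ q :=
  h2' ((compIso (B := B) p q).hom ≫ h2 η ▷ cp q ≫ (compIso p' q).inv)

@[simp] lemma h2_wL {a b c : Str B} (p : a ⟶ b) {q q' : b ⟶ c} (η : q ⟶ q') :
    h2 (wL p η) = (compIso (B := B) p q).hom ≫ cp p ◁ h2 η ≫ (compIso p q').inv := rfl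

@[simp] lemma h2_wR {a b c : Str B} {p p' : a ⟶ b} (η : p ⟶ p') (q : b ⟶ c) :
    h2 (wR η q) = (compIso (B := B) p q).hom ≫ h2 η ▷ cp q ≫ (compIso p' q).inv := rfl

@[simp] lemma wL_id {a b c : Str B} (p : a ⟶ b) (q : b ⟶ c) : wL p (𝟙 q) = 𝟙 (p ≫ q) := by
  apply h2_inj; simp [h2, h2', wL]

@[simp] lemma wR_id {a b c : Str B} (p : a ⟶ b) (q : b ⟶ c) : wR (𝟙 p) q = 𝟙 (p ≫ q) := by
  apply h2_inj; simp [h2, h2', wR]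

lemma wL_eqToHom {a b c : Str B} (p : a ⟶ b) {q q' : b ⟶ c} (h : q = q') :
    wL p (eqToHom h) = eqToHom (congrArg (p ≫ ·) h) := by
  subst h; rw [eqToHom_refl, eqToHom_refl]; exact wL_id p q

lemma wR_eqToHom {a b c : Str B} {p p' : a ⟶ b} (h : p = p') (q : b ⟶ c) :
    wR (eqToHom h) q = eqToHom (congrArg (· ≫ q) h) := by
  subst h; rw [eqToHom_refl, eqToHom_refl]; exact wR_id p q


@[simp] lemma str_id_def (a : Str B) : (𝟙 a : a ⟶ a) = (Quiver.Path.nil : Quiver.Path (V := B) a.as a.as) := rfl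
@[simp] lemma str_comp_def {a b c : Str B} (p : a ⟶ b) (q : b ⟶ c) :
    p ≫ q = Quiver.Path.comp (V := B) p q := rfl

lemma compIso_nil_left_inv {a b : B} (q : Quiver.Path a b) :
    (compIso .nil q).inv = (λ_ (cp q)).hom ≫ eqToHom (congrArg cp q.nil_comp).symm := by
  refine (cancel_epi (compIso Quiver.Path.nil q).hom).1 ?_
  rw [Iso.hom_inv_id, compIso_nil_left]
  simp

lemma ci_comp_left_hom {a b c d : B} (p : Quiver.Path a b) (q : Quiver.Path b c)
    (r : Quiver.Path c d) :
    (compIso (p.comp q) r).hom =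
      eqToHom (congrArg cp (p.comp_assoc q r)) ≫ (compIso p (q.comp r)).hom ≫
        cp p ◁ (compIso q r).hom ≫ (α_ (cp p) (cp q) (cp r)).inv ≫ (compIso p q).inv ▷ cp r := by
  rw [← cancel_mono ((compIso p q).hom ▷ cp r), ← cancel_mono ((α_ (cp p) (cp q) (cp r)).hom)]
  simpa [Category.assoc] using compIso_assoc p q r

lemma ci_comp_left_inv {a b c d : B} (p : Quiver.Path a b) (q : Quiver.Path b c)
    (r : Quiver.Path c d) :
    (compIso (p.comp q) r).inv =
      (compIso p q).hom ▷ cp r ≫ (α_ (cp p) (cp q) (cp r)).hom ≫ cp p ◁ (compIso q r).inv ≫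
        (compIso p (q.comp r)).inv ≫ eqToHom (congrArg cp (p.comp_assoc q r)).symm := by
  rw [← cancel_epi (compIso (p.comp q) r).hom, Iso.hom_inv_id, ci_comp_left_hom p q r]
  simp

lemma ci_right_hom {a b c d : B} (p : Quiver.Path a b) (q : Quiver.Path b c)
    (r : Quiver.Path c d) :
    (compIso p (q.comp r)).hom =
      eqToHom (congrArg cp (p.comp_assoc q r)).symm ≫ (compIso (p.comp q) r).hom ≫
        (compIso p q).hom ▷ cp r ≫ (α_ (cp p) (cp q) (cp r)).hom ≫ cp p ◁ (compIso q r).inv := by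
  rw [← cancel_mono (cp p ◁ (compIso q r).hom),
    ← cancel_epi (eqToHom (congrArg cp (p.comp_assoc q r)))]
  simpa [Category.assoc] using (compIso_assoc p q r).symm

lemma ci_right_inv {a b c d : B} (p : Quiver.Path a b) (q : Quiver.Path b c)
    (r : Quiver.Path c d) :
    (compIso p (q.comp r)).inv =
      cp p ◁ (compIso q r).hom ≫ (α_ (cp p) (cp q) (cp r)).inv ≫ (compIso p q).inv ▷ cp r ≫
        (compIso (p.comp q) r).inv ≫ eqToHom (congrArg cp (p.comp_assoc q r)) := by
  rw [← cancel_epi (compIso p (q.comp r)).hom, Iso.hom_inv_id, ci_right_hom p q r]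
  simp

instance instBicat : Bicategory.{w, max u v} (Str B) where
  whiskerLeft := wL
  whiskerRight := wR
  associator p q r := eqToIso (Quiver.Path.comp_assoc p q r)
  leftUnitor p := eqToIso (Quiver.Path.nil_comp p)
  rightUnitor p := eqToIso rfl
  whiskerLeft_id := wL_id
  whiskerLeft_comp := by
    intros; apply h2_inj; simp only [h2_comp, h2_wL]; simp [Bicategory.whiskerLeft_comp]
  id_whiskerLeft := by
    intros
    apply h2_inj
    simp only [h2_wL, h2_comp, h2_eqToHom, eqToIso.hom, eqToIso.inv, str_id_def, cp_nil,
      compIso_nil_left, compIso_nil_left_inv, Bicategory.id_whiskerLeft]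
    simp
  comp_whiskerLeft := by
    intro a b c d p q r r' η
    apply h2_inj
    simp only [h2_wL, h2_comp, h2_eqToHom, eqToIso.hom, eqToIso.inv, str_comp_def]
    rw [ci_comp_left_hom p q r, ci_comp_left_inv p q r']
    simp only [Category.assoc, Iso.inv_hom_id_assoc, inv_hom_whiskerRight_assoc]
    rw [← whisker_exchange_assoc]
    simp [Bicategory.comp_whiskerLeft, Bicategory.whiskerLeft_comp]
  id_whiskerRight := wR_id
  comp_whiskerRight := by
    intros; apply h2_inj; simp only [h2_comp, h2_wR]; simp [Bicategory.comp_whiskerRight]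
  whiskerRight_id := by
    intros
    apply h2_inj
    simp only [h2_wR, h2_comp, h2_eqToHom, eqToIso.hom, eqToIso.inv, str_id_def, cp_nil,
      compIso_nil, Iso.symm_hom, Iso.symm_inv, Bicategory.whiskerRight_id]
    simp
    erw [Category.id_comp, Category.comp_id]
  whiskerRight_comp := by
    intro a b c d p p' η q r
    apply h2_inj
    simp only [h2_wR, h2_comp, h2_eqToHom, eqToIso.hom, eqToIso.inv, str_comp_def]
    rw [ci_right_hom p q r, ci_right_inv p' q r]
    simp only [Category.assoc]
    rw [whisker_exchange_assoc]
    rw [← associator_naturality_left_assoc]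
    simp [Bicategory.comp_whiskerRight]
  whisker_assoc := by
    intro a b c d p q q' η r
    apply h2_inj
    simp only [h2_wR, h2_wL, h2_comp, h2_eqToHom, eqToIso.hom, eqToIso.inv, str_comp_def]
    rw [ci_comp_left_hom p q r, ci_comp_left_inv p q' r]
    simp only [Category.assoc, Iso.inv_hom_id_assoc, inv_hom_whiskerRight_assoc,
      Bicategory.comp_whiskerRight, Bicategory.whiskerLeft_comp]
    rw [Bicategory.whisker_assoc]
    simp
  whisker_exchange := by
    intros; apply h2_inj; simp only [h2_comp, h2_wL, h2_wR]
    simp only [Category.assoc, Iso.inv_hom_id_assoc]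
    congr 1
    rw [← Category.assoc, whisker_exchange]
    simp
  pentagon := by
    intros
    simp only [eqToIso.hom, wL_eqToHom, wR_eqToHom, eqToHom_trans]
  triangle := by
    intros
    simp only [eqToIso.hom, eqToIso.inv, wL_eqToHom, wR_eqToHom, eqToHom_trans]
    exact (wR_id _ _).symm

instance : Bicategory.Strict (Str B) where
  id_comp p := Quiver.Path.nil_comp p
  comp_id p := rfl
  assoc p q r := Quiver.Path.comp_assoc p q r

@[simp] lemma str_whiskerLeft_def {a b c : Str B} (p : a ⟶ b) {q q' : b ⟶ c} (η : q ⟶ q') :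
    p ◁ η = wL p η := rfl
@[simp] lemma str_whiskerRight_def {a b c : Str B} {p p' : a ⟶ b} (η : p ⟶ p') (q : b ⟶ c) :
    η ▷ q = wR η q := rfl
@[simp] lemma str_associator_hom {a b c d : Str B} (p : a ⟶ b) (q : b ⟶ c) (r : c ⟶ d) :
    (α_ p q r).hom =
      eqToHom (show (p ≫ q) ≫ r = p ≫ (q ≫ r) from Quiver.Path.comp_assoc p q r) := rfl
@[simp] lemma str_associator_inv {a b c d : Str B} (p : a ⟶ b) (q : b ⟶ c) (r : c ⟶ d) :
    (α_ p q r).inv =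
      eqToHom (show (p ≫ q) ≫ r = p ≫ (q ≫ r) from Quiver.Path.comp_assoc p q r).symm := rfl
@[simp] lemma str_leftUnitor_hom {a b : Str B} (p : a ⟶ b) :
    (λ_ p).hom = eqToHom (show 𝟙 a ≫ p = p from Quiver.Path.nil_comp p) := rfl
@[simp] lemma str_leftUnitor_inv {a b : Str B} (p : a ⟶ b) :
    (λ_ p).inv = eqToHom (show 𝟙 a ≫ p = p from Quiver.Path.nil_comp p).symm := rfl
@[simp] lemma str_rightUnitor_hom {a b : Str B} (p : a ⟶ b) :
    (ρ_ p).hom = eqToHom (show p ≫ 𝟙 b = p from rfl) := rfl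
@[simp] lemma str_rightUnitor_inv {a b : Str B} (p : a ⟶ b) :
    (ρ_ p).inv = eqToHom (show p ≫ 𝟙 b = p from rfl).symm := rfl

/-- build an iso of paths from an iso of composites -/
def iso2 {a b : Str B} {p q : a ⟶ b} (e : cp (B := B) p ≅ cp q) : p ≅ q where
  hom := h2' e.hom
  inv := h2' e.inv
  hom_inv_id := by apply h2_inj; exact e.hom_inv_id
  inv_hom_id := by apply h2_inj; exact e.inv_hom_id

@[simp] lemma h2_iso2_hom {a b : Str B} {p q : a ⟶ b} (e : cp (B := B) p ≅ cp q) :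
    h2 (iso2 e).hom = e.hom := rfl
@[simp] lemma h2_iso2_inv {a b : Str B} {p q : a ⟶ b} (e : cp (B := B) p ≅ cp q) :
    h2 (iso2 e).inv = e.inv := rfl

set_option maxHeartbeats 3000000 in
/-- the strictification pseudofunctor -/
def strF : Pseudofunctor B (Str B) where
  obj a := ⟨a⟩
  map f := f.toPath
  map₂ {a b f g} η := h2' (𝟙 a ◁ η)
  map₂_id := by intro a b f; apply h2_inj; exact Bicategory.whiskerLeft_id (𝟙 a) f
  map₂_comp := by intro a b f g h η θ; apply h2_inj; exact Bicategory.whiskerLeft_comp (𝟙 a) η θ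
  mapId a := iso2 (p := Quiver.Hom.toPath (𝟙 a)) (q := Quiver.Path.nil) (ρ_ (𝟙 a))
  mapComp {a b c} f g := iso2 (p := Quiver.Hom.toPath (f ≫ g))
    (q := Quiver.Path.comp f.toPath g.toPath) ((λ_ (f ≫ g)) ≪≫ whiskerRightIso (λ_ f).symm g)
  map₂_whisker_left := by
    intro a b c f g h η
    apply h2_inj
    dsimp only [str_whiskerLeft_def, str_whiskerRight_def, str_associator_hom, str_associator_inv,
      str_leftUnitor_hom, str_leftUnitor_inv, str_rightUnitor_hom, str_rightUnitor_inv, wL, wR,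
      iso2]
    try simp only [h2_comp, h2_eqToHom]
    dsimp only [h2, h2', cp, Quiver.Hom.toPath, Quiver.Path.comp, str_comp_def, str_id_def,
      compIso_cons, compIso_nil]
    simp only [Iso.trans_hom, Iso.trans_inv, whiskerRightIso_hom,
      whiskerRightIso_inv, Iso.symm_hom, Iso.symm_inv]
    try rw [ci_right_hom]
    try rw [ci_right_inv]
    try simp only [Quiver.Path.comp_cons, Quiver.Path.comp_nil]
    try simp only [cp, Quiver.Hom.toPath, compIso_cons, compIso_nil, Iso.trans_hom, Iso.trans_inv,
      whiskerRightIso_hom, whiskerRightIso_inv, Iso.symm_hom, Iso.symm_inv]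
    try rw [eqToHom_refl]
    try rw [eqToHom_refl]
    try rw [eqToHom_refl]
    try simp only [Category.comp_id, Category.id_comp, Category.assoc]
    try erw [eqToHom_refl]
    bicategory
  map₂_whisker_right := by
    intro a b c f g η h
    apply h2_inj
    dsimp only [str_whiskerLeft_def, str_whiskerRight_def, str_associator_hom, str_associator_inv,
      str_leftUnitor_hom, str_leftUnitor_inv, str_rightUnitor_hom, str_rightUnitor_inv, wL, wR,
      iso2]
    try simp only [h2_comp, h2_eqToHom]
    dsimp only [h2, h2', cp, Quiver.Hom.toPath, Quiver.Path.comp, str_comp_def, str_id_def,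
      compIso_cons, compIso_nil]
    simp only [Iso.trans_hom, Iso.trans_inv, whiskerRightIso_hom,
      whiskerRightIso_inv, Iso.symm_hom, Iso.symm_inv]
    try rw [ci_right_hom]
    try rw [ci_right_inv]
    try simp only [Quiver.Path.comp_cons, Quiver.Path.comp_nil]
    try simp only [cp, Quiver.Hom.toPath, compIso_cons, compIso_nil, Iso.trans_hom, Iso.trans_inv,
      whiskerRightIso_hom, whiskerRightIso_inv, Iso.symm_hom, Iso.symm_inv]
    try rw [eqToHom_refl]
    try rw [eqToHom_refl]
    try rw [eqToHom_refl]
    try simp only [Category.comp_id, Category.id_comp, Category.assoc]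
    try erw [eqToHom_refl]
    bicategory
  map₂_associator := by
    intro a b c d f g h
    apply h2_inj
    dsimp only [str_whiskerLeft_def, str_whiskerRight_def, str_associator_hom, str_associator_inv,
      str_leftUnitor_hom, str_leftUnitor_inv, str_rightUnitor_hom, str_rightUnitor_inv, wL, wR,
      iso2]
    try simp only [h2_comp, h2_eqToHom]
    dsimp only [h2, h2', cp, Quiver.Hom.toPath, Quiver.Path.comp, str_comp_def, str_id_def,
      compIso_cons, compIso_nil]
    simp only [Iso.trans_hom, Iso.trans_inv, whiskerRightIso_hom,
      whiskerRightIso_inv, Iso.symm_hom, Iso.symm_inv]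
    try rw [ci_right_hom]
    try rw [ci_right_inv]
    try simp only [Quiver.Path.comp_cons, Quiver.Path.comp_nil]
    try simp only [cp, Quiver.Hom.toPath, compIso_cons, compIso_nil, Iso.trans_hom, Iso.trans_inv,
      whiskerRightIso_hom, whiskerRightIso_inv, Iso.symm_hom, Iso.symm_inv]
    try rw [eqToHom_refl]
    try rw [eqToHom_refl]
    try rw [eqToHom_refl]
    try simp only [Category.comp_id, Category.id_comp, Category.assoc]
    try erw [eqToHom_refl]
    bicategory
  map₂_left_unitor := by
    intro a b f
    apply h2_inj
    dsimp only [str_whiskerLeft_def, str_whiskerRight_def, str_associator_hom, str_associator_inv,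
      str_leftUnitor_hom, str_leftUnitor_inv, str_rightUnitor_hom, str_rightUnitor_inv, wL, wR,
      iso2]
    try simp only [h2_comp, h2_eqToHom]
    dsimp only [h2, h2', cp, Quiver.Hom.toPath, Quiver.Path.comp, str_comp_def, str_id_def,
      compIso_cons, compIso_nil]
    simp only [Iso.trans_hom, Iso.trans_inv, whiskerRightIso_hom,
      whiskerRightIso_inv, Iso.symm_hom, Iso.symm_inv]
    try rw [ci_right_hom]
    try rw [ci_right_inv]
    try simp only [Quiver.Path.comp_cons, Quiver.Path.comp_nil]
    try simp only [cp, Quiver.Hom.toPath, compIso_cons, compIso_nil, Iso.trans_hom, Iso.trans_inv,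
      whiskerRightIso_hom, whiskerRightIso_inv, Iso.symm_hom, Iso.symm_inv]
    try rw [eqToHom_refl]
    try rw [eqToHom_refl]
    try rw [eqToHom_refl]
    try simp only [Category.comp_id, Category.id_comp, Category.assoc]
    try erw [eqToHom_refl]
    bicategory
  map₂_right_unitor := by
    intro a b f
    apply h2_inj
    dsimp only [str_whiskerLeft_def, str_whiskerRight_def, str_associator_hom, str_associator_inv,
      str_leftUnitor_hom, str_leftUnitor_inv, str_rightUnitor_hom, str_rightUnitor_inv, wL, wR,
      iso2]
    try simp only [h2_comp, h2_eqToHom]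
    dsimp only [h2, h2', cp, Quiver.Hom.toPath, Quiver.Path.comp, str_comp_def, str_id_def,
      compIso_cons, compIso_nil]
    simp only [Iso.trans_hom, Iso.trans_inv, whiskerRightIso_hom,
      whiskerRightIso_inv, Iso.symm_hom, Iso.symm_inv]
    try rw [ci_right_hom]
    try rw [ci_right_inv]
    try simp only [Quiver.Path.comp_cons, Quiver.Path.comp_nil]
    try simp only [cp, Quiver.Hom.toPath, compIso_cons, compIso_nil, Iso.trans_hom, Iso.trans_inv,
      whiskerRightIso_hom, whiskerRightIso_inv, Iso.symm_hom, Iso.symm_inv]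
    try rw [eqToHom_refl]
    try rw [eqToHom_refl]
    try rw [eqToHom_refl]
    try simp only [Category.comp_id, Category.id_comp, Category.assoc]
    try erw [eqToHom_refl]
    bicategory

end Strictification

open Strictification in
/-- Every bicategory is equivalent, in the 2-category of bicategories and icons, to a
2-category: there is a strict bicategory `B'` and a pseudofunctor `F : B ⟶ B'` that is
bijective on objects and an equivalence on all hom-categories. -/
theorem exists_strictification
    (B : Type u) [Bicategory.{w, v} B] :
    ∃ (B' : Type u) (instB' : Bicategory.{w, max u v} B')
      (instStrict : Bicategory.Strict B') (F : Pseudofunctor B B'),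
      Function.Bijective F.obj ∧
        ∀ a b : B, (F.mapFunctor a b).IsEquivalence := by
  refine ⟨Str B, inferInstance, inferInstance, strF,
    ⟨fun _ _ h => congrArg Str.as h, fun s => ⟨s.as, rfl⟩⟩, fun a b => ?_⟩
  have hfaith : ((strF (B := B)).mapFunctor a b).Faithful := by
    constructor
    intro f g η θ hEq
    have h1 : 𝟙 a ◁ η = 𝟙 a ◁ θ := hEq
    rw [Bicategory.id_whiskerLeft, Bicategory.id_whiskerLeft] at h1
    have h2 := (cancel_epi (λ_ f).hom).1 h1
    exact (cancel_mono (λ_ g).inv).1 h2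
  have hfull : ((strF (B := B)).mapFunctor a b).Full := by
    constructor
    intro f g φ
    refine ⟨(λ_ f).inv ≫ h2 φ ≫ (λ_ g).hom, ?_⟩
    apply h2_inj
    show 𝟙 a ◁ ((λ_ f).inv ≫ h2 φ ≫ (λ_ g).hom) = h2 φ
    rw [Bicategory.id_whiskerLeft]
    simp
    erw [Category.assoc, Iso.hom_inv_id, Category.comp_id]
  have hsurj : ((strF (B := B)).mapFunctor a b).EssSurj := by
    constructor
    intro p
    exact ⟨cp p, ⟨iso2 (p := Quiver.Hom.toPath (cp p)) (q := p) (λ_ (cp p))⟩⟩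
  exact ⟨hfaith, hfull, hsurj⟩


-- axiom check
-- #print axioms exists_strictification
end
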